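/- arXiv:1603.08428 — 3 statements merged into one kernel-verified Lean document; each statement's English description precedes it below -/
import Mathlib

section
/- Let D and Ω be bounded open domains in ℝ^m (m ≥ 2) whose boundaries have Lebesgue measure zero, and suppose φ : closure(Ω) → ℝ^m is continuous on closure(Ω), continuously differentiable on Ω, and maps Ω diffeomorphically onto D. If f : closure(D) → ℝ is continuous and f ≥ 0, then ∫_Ω f(φ(x)) · |det Dφ(x)| dx ≤ ∫_D f(y) dy. -/
open MeasureTheory Set

/-- Inequality (e10) of the paper: under the hypotheses of the change of variables
theorem with `m ≥ 2` and `f` continuous and nonnegative on `closure D`, one has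
`∫_Ω (f ∘ φ) |det Dφ| ≤ ∫_D f`. -/
theorem change_of_variables_le
    (m : ℕ) (hm : 2 ≤ m)
    (D Ω : Set (EuclideanSpace ℝ (Fin m)))
    (hDopen : IsOpen D) (hDbdd : Bornology.IsBounded D)
    (hΩopen : IsOpen Ω) (hΩbdd : Bornology.IsBounded Ω)
    (hDfr : volume (frontier D) = 0) (hΩfr : volume (frontier Ω) = 0)
    (φ ψ : EuclideanSpace ℝ (Fin m) → EuclideanSpace ℝ (Fin m))
    (hφcont : ContinuousOn φ (closure Ω))
    (hφC1 : ContDiffOn ℝ 1 φ Ω)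
    (hφim : φ '' Ω = D)
    (hψC1 : ContDiffOn ℝ 1 ψ D)
    (hψφ : ∀ x ∈ Ω, ψ (φ x) = x)
    (hφψ : ∀ y ∈ D, φ (ψ y) = y)
    (f : EuclideanSpace ℝ (Fin m) → ℝ)
    (hf : ContinuousOn f (closure D))
    (hf0 : ∀ y ∈ closure D, 0 ≤ f y) :
    ∫ x in Ω, f (φ x) * |(fderiv ℝ φ x).det| ≤ ∫ y in D, f y := by
  have hinj : Set.InjOn φ Ω := fun a ha b hb h => by
    rw [← hψφ a ha, ← hψφ b hb, h]
  have hderiv : ∀ x ∈ Ω, HasFDerivWithinAt φ (fderiv ℝ φ x) Ω x := fun x hx =>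
    ((hφC1.differentiableOn one_ne_zero x hx).differentiableAt
      (hΩopen.mem_nhds hx)).hasFDerivAt.hasFDerivWithinAt
  have := MeasureTheory.integral_image_eq_integral_abs_det_fderiv_smul volume
    hΩopen.measurableSet hderiv hinj f
  rw [hφim] at this
  rw [this]
  apply le_of_eq
  congr 1
  ext x
  rw [smul_eq_mul, mul_comm]
end

section
/- Let m ≥ 2. Let U ⊂ ℝ^{m−1} be a Jordan measurable bounded closed set and let x : U → ℝ^m be a C¹-parametrized surface with normal vector N(u). Let Ũ ⊂ ℝ^{m−1} be a Jordan measurable bounded closed set and let ψ : Ũ → U be a C¹-diffeomorphism; set x̃ = x ∘ ψ, with normal vector Ñ(v) defined in the same way from the Jacobian of x̃. Then for every continuous function f : x(U) → ℝ, ∫_U f(x(u)) |N(u)| du = ∫_{Ũ} f(x̃(v)) |Ñ(v)| dv, where |·| is the Euclidean norm on ℝ^m. -/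
open MeasureTheory Set

/-- Well-definedness of the surface integral (Section 2 of the paper):
if `x : U → ℝ^m` (with `m = n + 1 ≥ 2`) is a `C¹`-parametrized surface on a Jordan
measurable bounded closed set `U ⊆ ℝ^{m-1}` (derivative data `x'`, injective on the
interior, Jacobian of rank `m - 1`), with normal vector `N`, and `ψ : U₂ → U` is a
`C¹`-diffeomorphism (with inverse `ψinv`), then the reparametrized surface
`x ∘ ψ` (derivative data `xψ'`, normal vector `N₂`) gives the same surface integral
`∫_U f(x(u)) |N(u)| du = ∫_{U₂} f(x(ψ(v))) |N₂(v)| dv` for every continuous `f` on `x(U)`.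
The index `i : Fin (n+1)` corresponds to the paper's `i + 1`, so the paper's sign
`(-1)^(i+1)` is `(-1)^i` here. -/
theorem surface_integral_well_defined
    (n : ℕ) (hn : 1 ≤ n)
    -- the parametrized surface x : U → ℝ^{n+1}
    (U : Set (EuclideanSpace ℝ (Fin n)))
    (hUclosed : IsClosed U) (hUbdd : Bornology.IsBounded U)
    (hUjordan : volume (frontier U) = 0)
    (x : EuclideanSpace ℝ (Fin n) → EuclideanSpace ℝ (Fin (n + 1)))
    (x' : EuclideanSpace ℝ (Fin n) →
      (EuclideanSpace ℝ (Fin n) →L[ℝ] EuclideanSpace ℝ (Fin (n + 1))))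
    (hx : ∀ u ∈ U, HasFDerivWithinAt x (x' u) U u)
    (hx'cont : ContinuousOn x' U)
    (hxinj : InjOn x (interior U))
    (hxrank : ∀ u ∈ U, (Matrix.of fun (i : Fin (n + 1)) (j : Fin n) =>
      x' u (EuclideanSpace.single j 1) i).rank = n)
    (N : EuclideanSpace ℝ (Fin n) → EuclideanSpace ℝ (Fin (n + 1)))
    (hN : ∀ u, ∀ i, N u i = (-1 : ℝ) ^ (i : ℕ) * (Matrix.of fun (j k : Fin n) =>
      x' u (EuclideanSpace.single k 1) (i.succAbove j)).det)
    -- the reparametrization ψ : U₂ → U, a C¹-diffeomorphism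
    (U₂ : Set (EuclideanSpace ℝ (Fin n)))
    (hU₂closed : IsClosed U₂) (hU₂bdd : Bornology.IsBounded U₂)
    (hU₂jordan : volume (frontier U₂) = 0)
    (ψ ψinv : EuclideanSpace ℝ (Fin n) → EuclideanSpace ℝ (Fin n))
    (hψC1 : ContDiffOn ℝ 1 ψ U₂) (hψinvC1 : ContDiffOn ℝ 1 ψinv U)
    (hψim : ψ '' U₂ = U)
    (hψinvψ : ∀ v ∈ U₂, ψinv (ψ v) = v)
    (hψψinv : ∀ u ∈ U, ψ (ψinv u) = u)
    -- the reparametrized surface x ∘ ψ and its normal vector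
    (xψ' : EuclideanSpace ℝ (Fin n) →
      (EuclideanSpace ℝ (Fin n) →L[ℝ] EuclideanSpace ℝ (Fin (n + 1))))
    (hxψ : ∀ v ∈ U₂, HasFDerivWithinAt (x ∘ ψ) (xψ' v) U₂ v)
    (N₂ : EuclideanSpace ℝ (Fin n) → EuclideanSpace ℝ (Fin (n + 1)))
    (hN₂ : ∀ v, ∀ i, N₂ v i = (-1 : ℝ) ^ (i : ℕ) * (Matrix.of fun (j k : Fin n) =>
      xψ' v (EuclideanSpace.single k 1) (i.succAbove j)).det)
    -- the integrand
    (f : EuclideanSpace ℝ (Fin (n + 1)) → ℝ)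
    (hf : ContinuousOn f (x '' U)) :
    ∫ u in U, f (x u) * ‖N u‖ = ∫ v in U₂, f (x (ψ v)) * ‖N₂ v‖ := by
  classical
  have hsum : ∀ {m : ℕ} (g : Fin n → EuclideanSpace ℝ (Fin m)) (i : Fin m),
      (∑ l, g l) i = ∑ l, g l i := fun g i => by rw [WithLp.ofLp_sum, Finset.sum_apply]
  have hψdiff : ∀ v ∈ U₂, HasFDerivWithinAt ψ (fderivWithin ℝ ψ U₂ v) U₂ v := fun v hv =>
    ((hψC1 v hv).differentiableWithinAt one_ne_zero).hasFDerivWithinAt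
  have hinj : InjOn ψ U₂ := fun a ha b hb h => by rw [← hψinvψ a ha, h, hψinvψ b hb]
  have hcov := integral_image_eq_integral_abs_det_fderiv_smul volume
    hU₂closed.measurableSet hψdiff hinj (fun u => f (x u) * ‖N u‖)
  rw [hψim] at hcov
  rw [hcov]
  apply integral_congr_ae
  have hnull : (volume.restrict U₂) (interior U₂)ᶜ = 0 := by
    rw [Measure.restrict_apply (isOpen_interior.isClosed_compl.measurableSet)]
    refine le_antisymm (le_trans (measure_mono ?_) hU₂jordan.le) zero_le
    intro z hz
    exact ⟨subset_closure hz.2, hz.1⟩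
  have hae : ∀ᵐ v ∂(volume.restrict U₂), v ∈ interior U₂ := by
    rw [MeasureTheory.ae_iff]
    exact hnull
  filter_upwards [hae] with v hv
  have hvU₂ : v ∈ U₂ := interior_subset hv
  have huU : ψ v ∈ U := hψim ▸ mem_image_of_mem ψ hvU₂
  have hmaps : MapsTo ψ U₂ U := hψim ▸ mapsTo_image ψ U₂
  set D := fderivWithin ℝ ψ U₂ v with hD
  have hcomp : HasFDerivWithinAt (x ∘ ψ) ((x' (ψ v)).comp D) U₂ v :=
    (hx _ huU).comp v (hψdiff v hvU₂) hmaps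
  have huniq : UniqueDiffWithinAt ℝ U₂ v :=
    uniqueDiffWithinAt_of_mem_nhds (mem_interior_iff_mem_nhds.mp hv)
  have heq : xψ' v = (x' (ψ v)).comp D := huniq.eq (hxψ v hvU₂) hcomp
  set A : Matrix (Fin (n + 1)) (Fin n) ℝ :=
    Matrix.of fun i k => x' (ψ v) (EuclideanSpace.single k 1) i with hA
  set B : Matrix (Fin n) (Fin n) ℝ :=
    Matrix.of fun j k => D (EuclideanSpace.single k 1) j with hB
  have hexp : ∀ w : EuclideanSpace ℝ (Fin n),
      w = ∑ l, w l • EuclideanSpace.single l (1 : ℝ) := by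
    intro w
    ext i
    rw [hsum]
    simp [EuclideanSpace.single_apply]
  have hAB : ∀ i : Fin (n + 1),
      (Matrix.of fun (j k : Fin n) =>
        xψ' v (EuclideanSpace.single k 1) (i.succAbove j))
      = (A.submatrix i.succAbove id) * B := by
    intro i
    ext j k
    rw [heq]
    simp only [Matrix.of_apply, ContinuousLinearMap.coe_comp', Function.comp_apply,
      Matrix.mul_apply, Matrix.submatrix_apply, id_eq]
    conv_lhs => rw [hexp (D (EuclideanSpace.single k 1))]
    rw [map_sum, hsum]
    refine Finset.sum_congr rfl fun l _ => ?_
    rw [_root_.map_smul, PiLp.smul_apply, smul_eq_mul, mul_comm]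
    rfl
  have hdetB : B.det = D.det := by
    rw [ContinuousLinearMap.det]
    rw [← LinearMap.det_toMatrix (EuclideanSpace.basisFun (Fin n) ℝ).toBasis]
    congr 1
  have hN₂eq : N₂ v = B.det • N (ψ v) := by
    ext i
    have hAeq : (Matrix.of fun (j k : Fin n) =>
        x' (ψ v) (EuclideanSpace.single k 1) (i.succAbove j))
        = A.submatrix i.succAbove id := rfl
    rw [PiLp.smul_apply, smul_eq_mul, hN₂, hN, hAeq, hAB i, Matrix.det_mul]
    ring
  have hnorm : ‖N₂ v‖ = |B.det| * ‖N (ψ v)‖ := by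
    rw [hN₂eq, norm_smul, Real.norm_eq_abs]
  show |D.det| • (f (x (ψ v)) * ‖N (ψ v)‖) = f (x (ψ v)) * ‖N₂ v‖
  rw [hnorm, smul_eq_mul, hdetB]
  ring
end

section
/- Let m ≥ 2, let U ⊂ ℝ^{m−1} be a Jordan measurable bounded closed set with nonempty interior, and let φ₋, φ₊ : U → ℝ be C¹ functions with φ₋(x') < φ₊(x') for x' in the interior of U. Let D = { (x', t) ∈ ℝ^{m−1} × ℝ : x' ∈ interior(U), φ₋(x') < t < φ₊(x') }. If g is a real-valued function that is C¹ on an open neighborhood of closure(D), then ∫_D (∂g/∂x^m)(x) dx = ∫_U g(x', φ₊(x')) dx' − ∫_U g(x', φ₋(x')) dx'. -/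
open MeasureTheory Set

/-- Fubini computation for an `m`-type domain (key step in the proof of the divergence
theorem, Theorem 2 of the paper).  Here `m = n + 1 ≥ 2`, points of `ℝ^m` are written
as pairs `(x', t) ∈ ℝ^{m-1} × ℝ`, `U ⊆ ℝ^{m-1}` is a Jordan measurable bounded closed
set with nonempty interior, `φ₋ < φ₊` are `C¹` on `U`, `D` is the open region between
their graphs over the interior of `U`, and `g` is `C¹` on an open neighborhood `W` of
`closure D`.  Then `∫_D ∂g/∂x^m = ∫_U g(x', φ₊(x')) dx' - ∫_U g(x', φ₋(x')) dx'`. -/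
theorem m_type_fubini
    (n : ℕ) (hn : 1 ≤ n)
    (U : Set (EuclideanSpace ℝ (Fin n)))
    (hUclosed : IsClosed U) (hUbdd : Bornology.IsBounded U)
    (hUjordan : volume (frontier U) = 0)
    (hUint : (interior U).Nonempty)
    (φm φp : EuclideanSpace ℝ (Fin n) → ℝ)
    (hφm : ContDiffOn ℝ 1 φm U) (hφp : ContDiffOn ℝ 1 φp U)
    (hlt : ∀ x' ∈ interior U, φm x' < φp x')
    (D : Set (EuclideanSpace ℝ (Fin n) × ℝ))
    (hD : D = {p | p.1 ∈ interior U ∧ φm p.1 < p.2 ∧ p.2 < φp p.1})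
    (W : Set (EuclideanSpace ℝ (Fin n) × ℝ)) (hWopen : IsOpen W)
    (hDW : closure D ⊆ W)
    (g : EuclideanSpace ℝ (Fin n) × ℝ → ℝ)
    (hg : ContDiffOn ℝ 1 g W) :
    ∫ p in D, fderiv ℝ g p ((0 : EuclideanSpace ℝ (Fin n)), (1 : ℝ)) =
      (∫ x' in U, g (x', φp x')) - ∫ x' in U, g (x', φm x') := by
  have hUcomp : IsCompact U := Metric.isCompact_of_isClosed_isBounded hUclosed hUbdd
  set f : EuclideanSpace ℝ (Fin n) × ℝ → ℝ :=
    fun p => fderiv ℝ g p ((0 : EuclideanSpace ℝ (Fin n)), (1 : ℝ)) with hfdef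
  -- D is open
  have hDopen : IsOpen D := by
    rw [hD, isOpen_iff_mem_nhds]
    rintro ⟨x, t⟩ ⟨hx, h1, h2⟩
    have hφmc : ContinuousAt φm x :=
      (hφm.continuousOn.mono interior_subset).continuousAt (isOpen_interior.mem_nhds hx)
    have hφpc : ContinuousAt φp x :=
      (hφp.continuousOn.mono interior_subset).continuousAt (isOpen_interior.mem_nhds hx)
    have e1 : ∀ᶠ q : EuclideanSpace ℝ (Fin n) × ℝ in nhds (x, t), q.1 ∈ interior U :=
      continuousAt_fst.preimage_mem_nhds (isOpen_interior.mem_nhds hx)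
    have e2 : ∀ᶠ q : EuclideanSpace ℝ (Fin n) × ℝ in nhds (x, t), φm q.1 < q.2 :=
      (hφmc.comp continuousAt_fst).eventually_lt continuousAt_snd h1
    have e3 : ∀ᶠ q : EuclideanSpace ℝ (Fin n) × ℝ in nhds (x, t), q.2 < φp q.1 :=
      continuousAt_snd.eventually_lt (hφpc.comp continuousAt_fst) h2
    filter_upwards [e1, e2, e3] with q hq1 hq2 hq3
    exact ⟨hq1, hq2, hq3⟩
  have hDmeas : MeasurableSet D := hDopen.measurableSet
  -- D is bounded, closure D compact
  obtain ⟨Cm, hCm⟩ := hUcomp.exists_bound_of_continuousOn hφm.continuousOn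
  obtain ⟨Cp, hCp⟩ := hUcomp.exists_bound_of_continuousOn hφp.continuousOn
  have hDbdd : Bornology.IsBounded D := by
    apply (hUbdd.prod (Metric.isBounded_Icc (-(max Cm Cp)) (max Cm Cp))).subset
    rintro ⟨x, t⟩ hp
    rw [hD] at hp
    obtain ⟨hx, h1, h2⟩ := hp
    have hxU : x ∈ U := interior_subset hx
    have b1 := hCm x hxU
    have b2 := hCp x hxU
    rw [Real.norm_eq_abs, abs_le] at b1 b2
    constructor
    · exact hxU
    · constructor
      · have : -(max Cm Cp) ≤ φm x := le_trans (neg_le_neg (le_max_left Cm Cp)) b1.1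
        exact le_of_lt (lt_of_le_of_lt this h1)
      · exact le_of_lt (lt_of_lt_of_le h2 (le_trans b2.2 (le_max_right Cm Cp)))
  have hKcomp : IsCompact (closure D) :=
    Metric.isCompact_of_isClosed_isBounded isClosed_closure hDbdd.closure
  -- f is continuous on W, integrable on D
  have hfc : ContinuousOn f W :=
    (hg.continuousOn_fderiv_of_isOpen hWopen le_rfl).clm_apply continuousOn_const
  have hint : IntegrableOn f D := by
    exact ((hfc.mono hDW).integrableOn_compact hKcomp).mono_set subset_closure
  -- closure facts
  have hsegcl : ∀ x' ∈ interior U, ∀ t ∈ Icc (φm x') (φp x'), ((x', t) : _ × ℝ) ∈ closure D := by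
    intro x' hx t ht
    have hab : φm x' < φp x' := hlt x' hx
    have hmaps : MapsTo (fun t : ℝ => ((x', t) : _ × ℝ)) (Ioo (φm x') (φp x')) D := by
      intro s hs
      rw [hD]
      exact ⟨hx, hs.1, hs.2⟩
    have := hmaps.closure (Continuous.prodMk_right x')
    rw [closure_Ioo hab.ne] at this
    exact this ht
  -- inner integral computation
  have key : ∀ x', (∫ t, D.indicator f (x', t)) =
      (interior U).indicator (fun x' => g (x', φp x') - g (x', φm x')) x' := by
    intro x'
    by_cases hx : x' ∈ interior U
    · rw [indicator_of_mem hx]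
      set a := φm x' with ha
      set b := φp x' with hb
      have hab : a < b := hlt x' hx
      have hslice : (fun t => D.indicator f (x', t)) =
          (Ioo a b).indicator (fun t => f (x', t)) := by
        funext t
        by_cases ht : t ∈ Ioo a b
        · rw [indicator_of_mem ht, indicator_of_mem]
          rw [hD]; exact ⟨hx, ht.1, ht.2⟩
        · rw [indicator_of_notMem ht, indicator_of_notMem]
          rw [hD]; intro h; exact ht ⟨h.2.1, h.2.2⟩
      rw [hslice, integral_indicator measurableSet_Ioo]
      have hW' : ∀ t ∈ Icc a b, ((x', t) : _ × ℝ) ∈ W := fun t ht => hDW (hsegcl x' hx t ht)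
      have hderiv : ∀ t ∈ Icc a b, HasDerivAt (fun s => g (x', s)) (f (x', t)) t := by
        intro t ht
        have hdg : DifferentiableAt ℝ g (x', t) :=
          ((hg.contDiffAt (hWopen.mem_nhds (hW' t ht))).differentiableAt one_ne_zero)
        have hcurve : HasDerivAt (fun s : ℝ => ((x', s) : _ × ℝ))
            ((0 : EuclideanSpace ℝ (Fin n)), (1 : ℝ)) t :=
          HasDerivAt.prodMk (hasDerivAt_const t x') (hasDerivAt_id t)
        exact hdg.hasFDerivAt.comp_hasDerivAt t hcurve
      have hcont : ContinuousOn (fun t => f (x', t)) (Icc a b) := by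
        apply (hfc.comp ((continuous_const.prodMk continuous_id).continuousOn))
        intro t ht
        exact hW' t ht
      have hii : IntervalIntegrable (fun t => f (x', t)) volume a b := by
        apply hcont.intervalIntegrable_of_Icc hab.le
      rw [← integral_Ioc_eq_integral_Ioo, ← intervalIntegral.integral_of_le hab.le]
      exact intervalIntegral.integral_eq_sub_of_hasDerivAt
        (fun t ht => hderiv t (by rwa [uIcc_of_le hab.le] at ht)) hii
    · rw [indicator_of_notMem hx]
      have : (fun t => D.indicator f (x', t)) = fun _ => (0 : ℝ) := by
        funext t
        apply indicator_of_notMem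
        rw [hD]; intro h; exact hx h.1
      rw [this, integral_zero]
  -- Fubini
  have hfub : ∫ p in D, f p =
      ∫ x', (interior U).indicator (fun x' => g (x', φp x') - g (x', φm x')) x' := by
    rw [← integral_indicator hDmeas]
    have hI : Integrable (D.indicator f) (volume : Measure (EuclideanSpace ℝ (Fin n) × ℝ)) :=
      (integrable_indicator_iff hDmeas).2 hint
    rw [Measure.volume_eq_prod] at hI ⊢
    rw [integral_prod _ hI]
    exact integral_congr_ae (Filter.Eventually.of_forall key)
  rw [hfub, integral_indicator isOpen_interior.measurableSet]
  -- integrability of the boundary terms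
  obtain ⟨M, hM⟩ := hKcomp.exists_bound_of_continuousOn (hg.continuousOn.mono hDW)
  have hintU : volume (interior U) ≠ ⊤ := by
    exact ((hUbdd.subset interior_subset).measure_lt_top).ne
  have hip : IntegrableOn (fun x' => g (x', φp x')) (interior U) := by
    have hcont : ContinuousOn (fun x' => g (x', φp x')) (interior U) := by
      apply hg.continuousOn.comp
        ((continuousOn_id.prodMk (hφp.continuousOn.mono interior_subset)))
      intro x' hx
      exact hDW (hsegcl x' hx (φp x') ⟨(hlt x' hx).le, le_rfl⟩)
    refine ⟨hcont.aestronglyMeasurable isOpen_interior.measurableSet, ?_⟩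
    apply HasFiniteIntegral.restrict_of_bounded (C := M) hintU.lt_top
    filter_upwards [ae_restrict_mem isOpen_interior.measurableSet] with x' hx
    exact hM _ (hsegcl x' hx (φp x') ⟨(hlt x' hx).le, le_rfl⟩)
  have him : IntegrableOn (fun x' => g (x', φm x')) (interior U) := by
    have hcont : ContinuousOn (fun x' => g (x', φm x')) (interior U) := by
      apply hg.continuousOn.comp
        ((continuousOn_id.prodMk (hφm.continuousOn.mono interior_subset)))
      intro x' hx
      exact hDW (hsegcl x' hx (φm x') ⟨le_rfl, (hlt x' hx).le⟩)
    refine ⟨hcont.aestronglyMeasurable isOpen_interior.measurableSet, ?_⟩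
    apply HasFiniteIntegral.restrict_of_bounded (C := M) hintU.lt_top
    filter_upwards [ae_restrict_mem isOpen_interior.measurableSet] with x' hx
    exact hM _ (hsegcl x' hx (φm x') ⟨le_rfl, (hlt x' hx).le⟩)
  rw [integral_sub hip him]
  have hae : interior U =ᵐ[volume] U := by
    rw [Filter.eventuallyEq_set]
    have hnull : volume (U \ interior U) = 0 := by
      apply measure_mono_null _ hUjordan
      intro x hx
      rw [hUclosed.frontier_eq]
      exact hx
    filter_upwards [measure_eq_zero_iff_ae_notMem.mp hnull] with x hx
    constructor
    · intro h; exact interior_subset h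
    · intro h
      by_contra hni
      exact hx ⟨h, hni⟩
  rw [setIntegral_congr_set hae, setIntegral_congr_set hae]
end
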